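/- arXiv:math/0305302 — 3 statements merged into one kernel-verified Lean document; each statement's English description precedes it below -/
import Mathlib

section
/- Let k be a field of characteristic different from 2 and let a, b, c ∈ k be nonzero. Then there is an isomorphism of k-algebras ℍ[k, a, b] ⊗[k] ℍ[k, a, c] ≅ Matrix (Fin 2) (Fin 2) ℍ[k, a, b·c]. -/
open scoped Quaternion TensorProduct

section Aux

open Matrix QuaternionAlgebra

/-- A quaternion algebra with first parameter a square splits: explicit quaternionic basis
inside `M₂(k)`. -/
noncomputable def splitBasis (k : Type*) [Field k] (a c : k) :
    QuaternionAlgebra.Basis (Matrix (Fin 2) (Fin 2) k) (a * a) 0 c where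
  i := !![a, 0; 0, -a]
  j := !![0, 1; c, 0]
  k := !![0, a; -(a*c), 0]
  i_mul_i := by
    ext i j; fin_cases i <;> fin_cases j <;>
      simp [Matrix.mul_apply, Fin.sum_univ_succ, Matrix.one_apply]
  j_mul_j := by
    ext i j; fin_cases i <;> fin_cases j <;>
      simp [Matrix.mul_apply, Fin.sum_univ_succ, Matrix.one_apply]
  i_mul_j := by
    ext i j; fin_cases i <;> fin_cases j <;>
      simp [Matrix.mul_apply, Fin.sum_univ_succ]
  j_mul_i := by
    ext i j; fin_cases i <;> fin_cases j <;>
      simp [Matrix.mul_apply, Fin.sum_univ_succ] <;> ring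

/-- `ℍ[k, a*a, c] ≃ₐ[k] M₂(k)` when `a, c ≠ 0` and `char k ≠ 2`. -/
noncomputable def splitEquiv (k : Type*) [Field k] (hchar : (2 : k) ≠ 0)
    (a c : k) (ha : a ≠ 0) (hc : c ≠ 0) :
    ℍ[k, a * a, c] ≃ₐ[k] Matrix (Fin 2) (Fin 2) k := by
  refine AlgEquiv.ofBijective (splitBasis k a c).liftHom ?_
  rw [Function.bijective_iff_has_inverse]
  refine ⟨fun m => ⟨(m 0 0 + m 1 1) / 2, (m 0 0 - m 1 1) / (2 * a),
      (m 0 1 + m 1 0 / c) / 2, (m 0 1 - m 1 0 / c) / (2 * a)⟩, ?_, ?_⟩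
  · intro q
    ext <;>
      simp [splitBasis, QuaternionAlgebra.Basis.liftHom, QuaternionAlgebra.Basis.lift,
        Matrix.algebraMap_matrix_apply] <;>
      field_simp <;> ring
  · intro m
    simp only [splitBasis, QuaternionAlgebra.Basis.liftHom, QuaternionAlgebra.Basis.lift]
    ext i j
    fin_cases i <;> fin_cases j <;>
      simp [QuaternionAlgebra.Basis.lift, Matrix.algebraMap_matrix_apply] <;> field_simp <;> ring

/-- The lift of a quaternionic basis commutes with anything commuting with `i` and `j`. -/
theorem lift_commute {R A : Type*} [CommRing R] [Ring A] [Algebra R A] {c₁ c₂ : R}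
    (q : QuaternionAlgebra.Basis A c₁ 0 c₂) {u : A} (hi : Commute q.i u) (hj : Commute q.j u)
    (x : ℍ[R,c₁,c₂]) : Commute (q.liftHom x) u := by
  have hk : Commute q.k u := q.i_mul_j ▸ hi.mul_left hj
  simp only [QuaternionAlgebra.Basis.liftHom_apply, QuaternionAlgebra.Basis.lift]
  exact (((Algebra.commute_algebraMap_left _ _).add_left (hi.smul_left _)).add_left
    (hj.smul_left _)).add_left (hk.smul_left _)

variable (k : Type*) [Field k] (a b c : k)

/-- The copy of `ℍ[k, a, b*c]` inside `ℍ[k,a,b] ⊗ ℍ[k,a,c]`, generated by `i ⊗ 1` and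
`j ⊗ j`. -/
@[simps i j k]
noncomputable def bB :
    QuaternionAlgebra.Basis (ℍ[k,a,b] ⊗[k] ℍ[k,a,c]) a 0 (b * c) where
  i := (Basis.self k (c₁ := a) (c₂ := 0) (c₃ := b)).i ⊗ₜ 1
  j := (Basis.self k (c₁ := a) (c₂ := 0) (c₃ := b)).j ⊗ₜ (Basis.self k (c₁ := a) (c₂ := 0) (c₃ := c)).j
  k := (Basis.self k (c₁ := a) (c₂ := 0) (c₃ := b)).k ⊗ₜ (Basis.self k (c₁ := a) (c₂ := 0) (c₃ := c)).j
  i_mul_i := by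
    simp only [Algebra.TensorProduct.tmul_mul_tmul, mul_one,
      QuaternionAlgebra.Basis.i_mul_i, zero_smul, add_zero, TensorProduct.smul_tmul, TensorProduct.tmul_smul]
    rw [Algebra.TensorProduct.one_def]
  j_mul_j := by
    simp only [Algebra.TensorProduct.tmul_mul_tmul, QuaternionAlgebra.Basis.j_mul_j,
      TensorProduct.smul_tmul, TensorProduct.tmul_smul, smul_smul]
    rw [mul_comm c b, Algebra.TensorProduct.one_def]
  i_mul_j := by
    simp only [Algebra.TensorProduct.tmul_mul_tmul, one_mul, QuaternionAlgebra.Basis.i_mul_j]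
  j_mul_i := by
    simp only [Algebra.TensorProduct.tmul_mul_tmul, mul_one, QuaternionAlgebra.Basis.j_mul_i, zero_smul, zero_sub,
      TensorProduct.neg_tmul]

/-- The copy of `ℍ[k, a*a, c]` inside `ℍ[k,a,b] ⊗ ℍ[k,a,c]`, generated by `i ⊗ i` and
`1 ⊗ j`. -/
@[simps i j k]
noncomputable def bC :
    QuaternionAlgebra.Basis (ℍ[k,a,b] ⊗[k] ℍ[k,a,c]) (a * a) 0 c where
  i := (Basis.self k (c₁ := a) (c₂ := 0) (c₃ := b)).i ⊗ₜ (Basis.self k (c₁ := a) (c₂ := 0) (c₃ := c)).i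
  j := 1 ⊗ₜ (Basis.self k (c₁ := a) (c₂ := 0) (c₃ := c)).j
  k := (Basis.self k (c₁ := a) (c₂ := 0) (c₃ := b)).i ⊗ₜ (Basis.self k (c₁ := a) (c₂ := 0) (c₃ := c)).k
  i_mul_i := by
    simp only [Algebra.TensorProduct.tmul_mul_tmul, QuaternionAlgebra.Basis.i_mul_i, zero_smul, add_zero,
      TensorProduct.smul_tmul, TensorProduct.tmul_smul, smul_smul]
    rw [Algebra.TensorProduct.one_def]
  j_mul_j := by
    simp only [Algebra.TensorProduct.tmul_mul_tmul, one_mul, QuaternionAlgebra.Basis.j_mul_j,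
      TensorProduct.tmul_smul]
    rw [Algebra.TensorProduct.one_def]
  i_mul_j := by
    simp only [Algebra.TensorProduct.tmul_mul_tmul, mul_one, QuaternionAlgebra.Basis.i_mul_j]
  j_mul_i := by
    simp only [Algebra.TensorProduct.tmul_mul_tmul, one_mul, QuaternionAlgebra.Basis.j_mul_i, zero_smul, zero_sub,
      TensorProduct.tmul_neg]

end Aux

/-- Brauer product formula on the level of quaternion algebras: over a field
of characteristic `≠ 2`, `ℍ[k, a, b] ⊗[k] ℍ[k, a, c] ≅ M₂(ℍ[k, a, bc])`. -/
theorem quaternion_tensor_quaternion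
    (k : Type*) [Field k] (hchar : (2 : k) ≠ 0)
    (a b c : k) (ha : a ≠ 0) (hb : b ≠ 0) (hc : c ≠ 0) :
    Nonempty ((ℍ[k, a, b] ⊗[k] ℍ[k, a, c]) ≃ₐ[k]
      Matrix (Fin 2) (Fin 2) ℍ[k, a, b * c]) := by
  classical
  set A := ℍ[k,a,b] ⊗[k] ℍ[k,a,c]
  set qb := QuaternionAlgebra.Basis.self k (c₁ := a) (c₂ := 0) (c₃ := b)
  set qc := QuaternionAlgebra.Basis.self k (c₁ := a) (c₂ := 0) (c₃ := c)
  set f := (bB k a b c).liftHom with hf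
  set g := (bC k a b c).liftHom with hg
  -- commuting images
  have hii : Commute (bC k a b c).i (bB k a b c).i := by
    simp only [Commute, SemiconjBy, i_bB, i_bC, Algebra.TensorProduct.tmul_mul_tmul,
      one_mul, mul_one]
  have hji : Commute (bC k a b c).j (bB k a b c).i := by
    simp only [Commute, SemiconjBy, i_bB, j_bC, Algebra.TensorProduct.tmul_mul_tmul,
      one_mul, mul_one]
  have hij : Commute (bC k a b c).i (bB k a b c).j := by
    simp only [Commute, SemiconjBy, j_bB, i_bC, Algebra.TensorProduct.tmul_mul_tmul,
      QuaternionAlgebra.Basis.i_mul_j, QuaternionAlgebra.Basis.j_mul_i, zero_smul, zero_sub,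
      TensorProduct.neg_tmul, TensorProduct.tmul_neg, neg_neg]
  have hjj : Commute (bC k a b c).j (bB k a b c).j := by
    simp only [Commute, SemiconjBy, j_bB, j_bC, Algebra.TensorProduct.tmul_mul_tmul,
      one_mul, mul_one]
  have hcomm : ∀ (x : ℍ[k, a, b * c]) (y : ℍ[k, a * a, c]), Commute (f x) (g y) := by
    intro x y
    refine lift_commute _ ?_ ?_ x
    · exact (lift_commute _ hii hji y).symm
    · exact (lift_commute _ hij hjj y).symm
  set φ : (ℍ[k, a, b * c] ⊗[k] ℍ[k, a * a, c]) →ₐ[k] A :=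
    Algebra.TensorProduct.lift f g hcomm with hφ
  -- the four basis elements are in the range of φ
  have hfr : ∀ x, f x ∈ φ.range := by
    intro x
    exact ⟨x ⊗ₜ 1, by simp [hφ, Algebra.TensorProduct.lift_tmul]⟩
  have hgr : ∀ y, g y ∈ φ.range := by
    intro y
    exact ⟨1 ⊗ₜ y, by simp [hφ, Algebra.TensorProduct.lift_tmul]⟩
  have hBi : (bB k a b c).i ∈ φ.range := by
    have := hfr ⟨0, 1, 0, 0⟩
    simpa [hf, QuaternionAlgebra.Basis.lift] using this
  have hBj : (bB k a b c).j ∈ φ.range := by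
    have := hfr ⟨0, 0, 1, 0⟩
    simpa [hf, QuaternionAlgebra.Basis.lift] using this
  have hCi : (bC k a b c).i ∈ φ.range := by
    have := hgr ⟨0, 1, 0, 0⟩
    simpa [hg, QuaternionAlgebra.Basis.lift] using this
  have hCj : (bC k a b c).j ∈ φ.range := by
    have := hgr ⟨0, 0, 1, 0⟩
    simpa [hg, QuaternionAlgebra.Basis.lift] using this
  -- hence the four standard generators of A are in the range
  have hi1 : (qb.i ⊗ₜ (1 : ℍ[k,a,c]) : A) ∈ φ.range := hBi
  have hj2 : ((1 : ℍ[k,a,b]) ⊗ₜ qc.j : A) ∈ φ.range := hCj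
  have hi2 : ((1 : ℍ[k,a,b]) ⊗ₜ qc.i : A) ∈ φ.range := by
    have hm : (bB k a b c).i * (bC k a b c).i = a • ((1 : ℍ[k,a,b]) ⊗ₜ qc.i : A) := by
      simp only [i_bB, i_bC, Algebra.TensorProduct.tmul_mul_tmul, one_mul,
        QuaternionAlgebra.Basis.i_mul_i, zero_smul, add_zero, TensorProduct.smul_tmul, TensorProduct.tmul_smul]
      rfl
    have : ((1 : ℍ[k,a,b]) ⊗ₜ qc.i : A) = a⁻¹ • ((bB k a b c).i * (bC k a b c).i) := by
      rw [hm, smul_smul, inv_mul_cancel₀ ha, one_smul]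
    rw [this]
    exact Subalgebra.smul_mem _ (mul_mem hBi hCi) _
  have hj1 : (qb.j ⊗ₜ (1 : ℍ[k,a,c]) : A) ∈ φ.range := by
    have hm : (bB k a b c).j * (bC k a b c).j = c • (qb.j ⊗ₜ (1 : ℍ[k,a,c]) : A) := by
      simp only [j_bB, j_bC, Algebra.TensorProduct.tmul_mul_tmul, mul_one,
        QuaternionAlgebra.Basis.j_mul_j, TensorProduct.tmul_smul]
      rfl
    have : (qb.j ⊗ₜ (1 : ℍ[k,a,c]) : A) = c⁻¹ • ((bB k a b c).j * (bC k a b c).j) := by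
      rw [hm, smul_smul, inv_mul_cancel₀ hc, one_smul]
    rw [this]
    exact Subalgebra.smul_mem _ (mul_mem hBj hCj) _
  -- every pure tensor is in the range
  have hleft : ∀ x : ℍ[k,a,b], (x ⊗ₜ (1 : ℍ[k,a,c]) : A) ∈ φ.range := by
    intro x
    have hdec : x = algebraMap k _ x.re + x.imI • qb.i + x.imJ • qb.j + x.imK • qb.k := by
      ext <;> simp [qb, QuaternionAlgebra.Basis.self, Algebra.algebraMap_eq_smul_one]
    rw [hdec]
    simp only [TensorProduct.add_tmul, TensorProduct.smul_tmul']
    have hk1 : (qb.k ⊗ₜ (1 : ℍ[k,a,c]) : A) ∈ φ.range := by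
      have : (qb.k ⊗ₜ (1 : ℍ[k,a,c]) : A)
          = (qb.i ⊗ₜ (1 : ℍ[k,a,c])) * (qb.j ⊗ₜ (1 : ℍ[k,a,c])) := by
        simp [Algebra.TensorProduct.tmul_mul_tmul]
      rw [this]; exact mul_mem hi1 hj1
    have halg : ((algebraMap k ℍ[k,a,b] x.re) ⊗ₜ (1 : ℍ[k,a,c]) : A) ∈ φ.range := by
      rw [← Algebra.TensorProduct.algebraMap_apply]
      exact Subalgebra.algebraMap_mem _ _
    exact add_mem (add_mem (add_mem halg (Subalgebra.smul_mem _ hi1 _))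
      (Subalgebra.smul_mem _ hj1 _)) (Subalgebra.smul_mem _ hk1 _)
  have hright : ∀ y : ℍ[k,a,c], ((1 : ℍ[k,a,b]) ⊗ₜ y : A) ∈ φ.range := by
    intro y
    have hdec : y = algebraMap k _ y.re + y.imI • qc.i + y.imJ • qc.j + y.imK • qc.k := by
      ext <;> simp [qc, QuaternionAlgebra.Basis.self, Algebra.algebraMap_eq_smul_one]
    rw [hdec]
    simp only [TensorProduct.tmul_add, TensorProduct.tmul_smul]
    have hk2 : ((1 : ℍ[k,a,b]) ⊗ₜ qc.k : A) ∈ φ.range := by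
      have : ((1 : ℍ[k,a,b]) ⊗ₜ qc.k : A)
          = ((1 : ℍ[k,a,b]) ⊗ₜ qc.i) * ((1 : ℍ[k,a,b]) ⊗ₜ qc.j) := by
        simp [Algebra.TensorProduct.tmul_mul_tmul]
      rw [this]; exact mul_mem hi2 hj2
    have halg : ((1 : ℍ[k,a,b]) ⊗ₜ (algebraMap k ℍ[k,a,c] y.re) : A) ∈ φ.range := by
      rw [← Algebra.TensorProduct.includeRight_apply, AlgHom.commutes]
      exact Subalgebra.algebraMap_mem _ _
    exact add_mem (add_mem (add_mem halg (Subalgebra.smul_mem _ hi2 _))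
      (Subalgebra.smul_mem _ hj2 _)) (Subalgebra.smul_mem _ hk2 _)
  have hsurj : Function.Surjective φ := by
    rw [← AlgHom.range_eq_top, eq_top_iff]
    rintro z -
    induction z using TensorProduct.induction_on with
    | zero => exact zero_mem _
    | tmul x y =>
        have : (x ⊗ₜ y : A) = (x ⊗ₜ (1 : ℍ[k,a,c])) * ((1 : ℍ[k,a,b]) ⊗ₜ y) := by
          simp [Algebra.TensorProduct.tmul_mul_tmul]
        rw [this]
        exact mul_mem (hleft x) (hright y)
    | add u v hu hv => exact add_mem hu hv
  have hinj : Function.Injective φ := by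
    have hrank : Module.finrank k (ℍ[k, a, b * c] ⊗[k] ℍ[k, a * a, c]) = Module.finrank k A := by
      simp [A, Module.finrank_tensorProduct, QuaternionAlgebra.finrank_eq_four]
    exact (LinearMap.injective_iff_surjective_of_finrank_eq_finrank hrank).2 hsurj
  have e1 : (ℍ[k, a, b * c] ⊗[k] ℍ[k, a * a, c]) ≃ₐ[k] A :=
    AlgEquiv.ofBijective φ ⟨hinj, hsurj⟩
  exact ⟨(e1.symm.trans
      (Algebra.TensorProduct.congr AlgEquiv.refl (splitEquiv k hchar a c ha hc))).trans
    (matrixEquivTensor (R := k) (A := ℍ[k, a, b * c]) (n := Fin 2)).symm⟩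
end

section
/- Let k be a field of characteristic different from 2 and let a, b ∈ k be nonzero. Then the equation x² − a·y² − b·z² = 0 has a solution (x, y, z) ∈ k³ with (x, y, z) ≠ (0, 0, 0) if and only if there is an isomorphism of k-algebras ℍ[k, a, b] ≅ Matrix (Fin 2) (Fin 2) k. -/
open scoped Quaternion

theorem aux_split (k : Type*) [Field k] (hchar : (2 : k) ≠ 0)
    (a b : k) (ha : a ≠ 0) (hb : b ≠ 0) (p r : k) (hpr : p ^ 2 - a * r ^ 2 = b) :
    Nonempty (ℍ[k, a, b] ≃ₐ[k] Matrix (Fin 2) (Fin 2) k) := by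
  set I : Matrix (Fin 2) (Fin 2) k := !![0, a; 1, 0] with hI
  set J : Matrix (Fin 2) (Fin 2) k := !![p, -(a*r); r, -p] with hJ
  let B : QuaternionAlgebra.Basis (Matrix (Fin 2) (Fin 2) k) a 0 b :=
    { i := I
      j := J
      k := I * J
      i_mul_i := by
        ext i j
        fin_cases i <;> fin_cases j <;>
          simp [hI, Matrix.mul_apply, Fin.sum_univ_two, Matrix.one_apply]
      j_mul_j := by
        ext i j
        fin_cases i <;> fin_cases j <;>
          simp [hJ, Matrix.mul_apply, Fin.sum_univ_two, Matrix.one_apply] <;>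
          first | ring1 | linear_combination hpr
      i_mul_j := rfl
      j_mul_i := by
        ext i j
        fin_cases i <;> fin_cases j <;>
          simp [hI, hJ, Matrix.mul_apply, Fin.sum_univ_two] <;> ring }
  have hinj : Function.Injective B.liftHom := by
    rw [injective_iff_map_eq_zero]
    intro q hq
    rw [QuaternionAlgebra.Basis.liftHom_apply, QuaternionAlgebra.Basis.lift] at hq
    have key : ∀ i j : Fin 2,
        (algebraMap k (Matrix (Fin 2) (Fin 2) k) q.re + q.imI • I + q.imJ • J
          + q.imK • (I * J)) i j = 0 := by
      intro i j; rw [hq]; rfl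
    have e00 := key 0 0
    have e01 := key 0 1
    have e10 := key 1 0
    have e11 := key 1 1
    simp [hI, hJ, Matrix.mul_apply, Fin.sum_univ_two, Matrix.algebraMap_matrix_apply] at e00 e01 e10 e11
    have hre : q.re = 0 := by
      have : 2 * q.re = 0 := by linear_combination e00 + e11
      exact (mul_eq_zero.mp this).resolve_left hchar
    have hi : q.imI = 0 := by
      have h2 : 2 * (a * q.imI) = 0 := by linear_combination e01 + a * e10
      have := (mul_eq_zero.mp h2).resolve_left hchar
      exact (mul_eq_zero.mp this).resolve_left ha
    have hk : q.imK = 0 := by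
      have : q.imK * b = 0 := by
        linear_combination p * e10 - r * e00 - p * hi + r * hre - q.imK * hpr
      exact (mul_eq_zero.mp this).resolve_right hb
    have hj : q.imJ = 0 := by
      rcases eq_or_ne p 0 with hp | hp
      · have hr : r ≠ 0 := by
          intro h0; apply hb; rw [← hpr, hp, h0]; ring
        have : q.imJ * r = 0 := by linear_combination e10 - hi - p * hk
        exact (mul_eq_zero.mp this).resolve_right hr
      · have : q.imJ * p = 0 := by linear_combination e00 - hre - (a*r) * hk
        exact (mul_eq_zero.mp this).resolve_right hp
    ext <;> assumption
  have hsurj : Function.Surjective B.liftHom := by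
    have hfr : Module.finrank k ℍ[k,a,b] = Module.finrank k (Matrix (Fin 2) (Fin 2) k) := by
      rw [QuaternionAlgebra.finrank_eq_four, Module.finrank_matrix]
      simp
    exact (LinearMap.injective_iff_surjective_of_finrank_eq_finrank
      (f := AlgHom.toLinearMap B.liftHom) hfr).mp hinj
  exact ⟨AlgEquiv.ofBijective B.liftHom ⟨hinj, hsurj⟩⟩


/-- A smooth conic `x² − a y² − b z² = 0` over a field `k` of characteristic
`≠ 2` has a nontrivial `k`-point iff the quaternion algebra `ℍ[k, a, b]` is
split, i.e. isomorphic to `M₂(k)`. -/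
theorem conic_point_iff_quaternion_split
    (k : Type*) [Field k] (hchar : (2 : k) ≠ 0)
    (a b : k) (ha : a ≠ 0) (hb : b ≠ 0) :
    (∃ x y z : k, (x, y, z) ≠ (0, 0, 0) ∧ x ^ 2 - a * y ^ 2 - b * z ^ 2 = 0) ↔
      Nonempty (ℍ[k, a, b] ≃ₐ[k] Matrix (Fin 2) (Fin 2) k) := by
  constructor
  · rintro ⟨x, y, z, hne, heq⟩
    suffices h : ∃ p r : k, p ^ 2 - a * r ^ 2 = b by
      obtain ⟨p, r, hpr⟩ := h
      exact aux_split k hchar a b ha hb p r hpr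
    rcases eq_or_ne z 0 with hz | hz
    · -- then x² = a y², so a is a square and b is trivially a norm
      subst hz
      have hy : y ≠ 0 := by
        rintro rfl
        have hx : x = 0 := by
          have : x ^ 2 = 0 := by linear_combination heq
          exact pow_eq_zero_iff (n := 2) (by norm_num) |>.mp this
        exact hne (by simp [hx])
      have hx : x ≠ 0 := by
        intro hx0
        apply ha
        have : a * y ^ 2 = 0 := by rw [hx0] at heq; linear_combination -heq
        exact (mul_eq_zero.mp this).resolve_right (pow_ne_zero 2 hy)
      refine ⟨(b + 1) / 2, (1 - b) * y / (2 * x), ?_⟩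
      have h4 : (2 : k) * 2 ≠ 0 := mul_ne_zero hchar hchar
      field_simp
      ring_nf
      linear_combination ((b - 1) ^ 2) * heq
    · exact ⟨x / z, y / z, by field_simp; linear_combination heq⟩
  · rintro ⟨f⟩
    -- pull back the nilpotent matrix e₁₂
    set E : Matrix (Fin 2) (Fin 2) k := !![0, 1; 0, 0] with hE
    have hE2 : E * E = 0 := by
      ext i j
      fin_cases i <;> fin_cases j <;> simp [hE, Matrix.mul_apply, Fin.sum_univ_two]
    have hEne : E ≠ 0 := by
      intro h
      have := congrFun (congrFun h 0) 1
      simp [hE] at this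
    set q : ℍ[k, a, b] := f.symm E with hq
    have hqne : q ≠ 0 := by
      intro h
      apply hEne
      rw [hq] at h
      simpa using congrArg f h
    have hq2 : q * q = 0 := by
      rw [hq, ← map_mul, hE2, map_zero]
    -- component equations
    have hR : q.re * q.re + a * q.imI * q.imI + b * q.imJ * q.imJ
        - a * b * q.imK * q.imK = 0 := by
      have := congrArg QuaternionAlgebra.re hq2
      simpa [QuaternionAlgebra.re_mul] using this
    have hI : 2 * (q.re * q.imI) = 0 := by
      have := congrArg QuaternionAlgebra.imI hq2
      simp [QuaternionAlgebra.imI_mul] at this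
      linear_combination this
    have hJ : 2 * (q.re * q.imJ) = 0 := by
      have := congrArg QuaternionAlgebra.imJ hq2
      simp [QuaternionAlgebra.imJ_mul] at this
      linear_combination this
    have hK : 2 * (q.re * q.imK) = 0 := by
      have := congrArg QuaternionAlgebra.imK hq2
      simp [QuaternionAlgebra.imK_mul] at this
      linear_combination this
    -- the imaginary part is nonzero
    have him : ¬(q.imI = 0 ∧ q.imJ = 0 ∧ q.imK = 0) := by
      rintro ⟨h1, h2, h3⟩
      have hre : q.re = 0 := by
        have : q.re * q.re = 0 := by rw [h1, h2, h3] at hR; linear_combination hR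
        exact (mul_self_eq_zero).mp this
      exact hqne (by ext <;> assumption)
    have hre : q.re = 0 := by
      by_contra hre0
      apply him
      refine ⟨?_, ?_, ?_⟩
      · have := (mul_eq_zero.mp hI).resolve_left hchar
        exact (mul_eq_zero.mp this).resolve_left hre0
      · have := (mul_eq_zero.mp hJ).resolve_left hchar
        exact (mul_eq_zero.mp this).resolve_left hre0
      · have := (mul_eq_zero.mp hK).resolve_left hchar
        exact (mul_eq_zero.mp this).resolve_left hre0
    -- now a i² + b j² − a b k² = 0 nontrivially; convert to a conic point
    refine ⟨a * b * q.imK, b * q.imJ, a * q.imI, ?_, ?_⟩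
    · intro h
      apply him
      have h1 := congrArg Prod.fst h
      have h2 := congrArg (fun t => t.2.1) h
      have h3 := congrArg (fun t => t.2.2) h
      simp at h1 h2 h3
      refine ⟨?_, ?_, ?_⟩
      · rcases h3 with h3 | h3; · exact absurd h3 ha
        exact h3
      · rcases h2 with h2 | h2; · exact absurd h2 hb
        exact h2
      · rcases h1 with h1 | h1
        · rcases h1 with h1 | h1
          · exact absurd h1 ha
          · exact absurd h1 hb
        · exact h1
    · rw [hre] at hR
      linear_combination (-(a * b)) * hR
end

section
/- Let k be a field of characteristic different from 2 and let a, b, a', b' ∈ k be nonzero. Let R = k[X, Y]/(X² − a·Y² − b), which is an integral domain, and let K be its field of fractions (the function field of the conic C = (x² − a·y² − b·z² = 0)). Suppose the equation x² − a'·y² − b'·z² = 0 has a solution (x, y, z) ∈ K³ with (x, y, z) ≠ (0, 0, 0). Then either the equation x² − a'·y² − b'·z² = 0 has a solution (x, y, z) ∈ k³ with (x, y, z) ≠ (0, 0, 0), or there is an isomorphism of k-algebras ℍ[k, a, b] ≅ ℍ[k, a', b']. -/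
set_option maxHeartbeats 1000000

open scoped Quaternion
open Polynomial

/-- The affine coordinate ring `k[X, Y] / (X² − a·Y² − b)` of the conic
`x² − a·y² − b·z² = 0`. -/
noncomputable abbrev ConicCoordRing (k : Type*) [Field k] (a b : k) : Type _ :=
  MvPolynomial (Fin 2) k ⧸
    Ideal.span {(MvPolynomial.X 0) ^ 2 - MvPolynomial.C a * (MvPolynomial.X 1) ^ 2
      - MvPolynomial.C b}

private lemma coeff_sq_two_mul {k : Type*} [Field k] {p : Polynomial k} {m : ℕ}
    (h : p.natDegree ≤ m) : (p ^ 2).coeff (2 * m) = (p.coeff m) ^ 2 := by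
  rw [sq, sq, coeff_mul]
  rw [Finset.sum_eq_single (m, m)]
  · rintro ⟨i, j⟩ hij hne
    rw [Finset.HasAntidiagonal.mem_antidiagonal] at hij
    have : m < i ∨ m < j := by
      by_contra hc
      push_neg at hc
      exact hne (by simp only [Prod.mk.injEq]; omega)
    rcases this with hi | hj
    · rw [coeff_eq_zero_of_natDegree_lt (h.trans_lt hi), zero_mul]
    · rw [coeff_eq_zero_of_natDegree_lt (h.trans_lt hj), mul_zero]
  · intro hm
    exact absurd (Finset.HasAntidiagonal.mem_antidiagonal.mpr (by omega)) hm

private lemma max3_eq_zero {k : Type*} [Field k] {P Q R : Polynomial k} {m : ℕ}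
    (hm : m = max (max P.natDegree Q.natDegree) R.natDegree)
    (hP : P.coeff m = 0) (hQ : Q.coeff m = 0) (hR : R.coeff m = 0) : m = 0 := by
  have : m = P.natDegree ∨ m = Q.natDegree ∨ m = R.natDegree := by omega
  by_contra h0
  rcases this with h | h | h
  · rcases eq_or_ne P 0 with rfl | hne
    · simp at h; omega
    · exact hne (leadingCoeff_eq_zero.mp (by rwa [leadingCoeff, ← h]))
  · rcases eq_or_ne Q 0 with rfl | hne
    · simp at h; omega
    · exact hne (leadingCoeff_eq_zero.mp (by rwa [leadingCoeff, ← h]))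
  · rcases eq_or_ne R 0 with rfl | hne
    · simp at h; omega
    · exact hne (leadingCoeff_eq_zero.mp (by rwa [leadingCoeff, ← h]))

private lemma aniso_poly {k : Type*} [Field k] {c₁ c₂ c₃ : k}
    (h : ∀ x y z : k, c₁*x^2 + c₂*y^2 + c₃*z^2 = 0 → x = 0 ∧ y = 0 ∧ z = 0)
    (P Q R : Polynomial k)
    (hPQR : C c₁ * P^2 + C c₂ * Q^2 + C c₃ * R^2 = 0) : P = 0 ∧ Q = 0 ∧ R = 0 := by
  set m := max (max P.natDegree Q.natDegree) R.natDegree with hm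
  have hPm : P.natDegree ≤ m := by omega
  have hQm : Q.natDegree ≤ m := by omega
  have hRm : R.natDegree ≤ m := by omega
  have hco := congrArg (fun q => Polynomial.coeff q (2*m)) hPQR
  simp only [coeff_add, coeff_C_mul, coeff_zero, coeff_sq_two_mul hPm,
    coeff_sq_two_mul hQm, coeff_sq_two_mul hRm] at hco
  obtain ⟨h1, h2, h3⟩ := h _ _ _ hco
  have hm0 : m = 0 := max3_eq_zero hm h1 h2 h3
  rw [hm0] at h1 h2 h3
  refine ⟨?_, ?_, ?_⟩
  · rw [Polynomial.eq_C_of_natDegree_eq_zero (show P.natDegree = 0 by omega), h1, map_zero]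
  · rw [Polynomial.eq_C_of_natDegree_eq_zero (show Q.natDegree = 0 by omega), h2, map_zero]
  · rw [Polynomial.eq_C_of_natDegree_eq_zero (show R.natDegree = 0 by omega), h3, map_zero]

private lemma descent_aux {k : Type*} [Field k] {c₁ c₂ c₃ : k}
    (h : ∀ x y z : k, c₁*x^2 + c₂*y^2 + c₃*z^2 = 0 → x = 0 ∧ y = 0 ∧ z = 0)
    (p : Polynomial k) :
    ∀ n : ℕ, ∀ d A B D : Polynomial k, d ≠ 0 → d.natDegree ≤ n →
      C c₁ * A^2 + C c₂ * B^2 + C c₃ * D^2 = p * d^2 →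
      ∃ α β γ : Polynomial k, C c₁ * α^2 + C c₂ * β^2 + C c₃ * γ^2 = p := by
  intro n
  induction n with
  | zero =>
    intro d A B D hd hdeg heq
    refine ⟨C (d.coeff 0)⁻¹ * A, C (d.coeff 0)⁻¹ * B, C (d.coeff 0)⁻¹ * D, ?_⟩
    have hdC : d = C (d.coeff 0) := Polynomial.eq_C_of_natDegree_eq_zero (by omega)
    have hc0 : d.coeff 0 ≠ 0 := fun hc => hd (by rw [hdC, hc, map_zero])
    have hinv : C (d.coeff 0)⁻¹ * C (d.coeff 0) = 1 := by
      rw [← map_mul, inv_mul_cancel₀ hc0, map_one]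
    calc C c₁ * (C (d.coeff 0)⁻¹ * A)^2 + C c₂ * (C (d.coeff 0)⁻¹ * B)^2
          + C c₃ * (C (d.coeff 0)⁻¹ * D)^2
        = (C (d.coeff 0)⁻¹)^2 * (C c₁ * A^2 + C c₂ * B^2 + C c₃ * D^2) := by ring
      _ = (C (d.coeff 0)⁻¹)^2 * (p * d^2) := by rw [heq]
      _ = p * (C (d.coeff 0)⁻¹ * C (d.coeff 0))^2 := by rw [← hdC]; ring
      _ = p := by rw [hinv]; ring
  | succ n ih =>
    intro d A₀ B₀ D₀ hd hdeg heq₀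
    rcases le_or_gt d.natDegree n with hle | hlt
    · exact ih d A₀ B₀ D₀ hd hle heq₀
    have hnd : d.natDegree = n + 1 := by omega
    -- scale to make the denominator monic
    have hlc : d.leadingCoeff ≠ 0 := leadingCoeff_ne_zero.mpr hd
    have hCc : (C d.leadingCoeff⁻¹ : Polynomial k) ≠ 0 := by
      simpa using inv_ne_zero hlc
    set u : Polynomial k := C d.leadingCoeff⁻¹ with hu
    have hm : Monic (d * u) := monic_mul_leadingCoeff_inv hd
    have hd' : d * u ≠ 0 := hm.ne_zero
    have hnd' : (d * u).natDegree = n + 1 := by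
      rw [natDegree_mul hd hCc, hu, natDegree_C]; omega
    set d' := d * u with hd'def
    set A := A₀ * u with hA_def
    set B := B₀ * u with hB_def
    set D := D₀ * u with hD_def
    have heq : C c₁ * A^2 + C c₂ * B^2 + C c₃ * D^2 = p * d'^2 := by
      rw [hA_def, hB_def, hD_def, hd'def]
      linear_combination u^2 * heq₀
    clear heq₀
    -- division with remainder
    have hA : A = A %ₘ d' + d' * (A /ₘ d') := (modByMonic_add_div A d').symm
    have hB : B = B %ₘ d' + d' * (B /ₘ d') := (modByMonic_add_div B d').symm
    have hD : D = D %ₘ d' + d' * (D /ₘ d') := (modByMonic_add_div D d').symm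
    set r₁ := A %ₘ d'; set r₂ := B %ₘ d'; set r₃ := D %ₘ d'
    set W₁ := A /ₘ d'; set W₂ := B /ₘ d'; set W₃ := D /ₘ d'
    have hrd : ∀ r : Polynomial k, r.degree < d'.degree → r.natDegree ≤ n := by
      intro r hr
      rcases eq_or_ne r 0 with rfl | hne
      · simp
      · have := Polynomial.natDegree_lt_natDegree hne hr
        omega
    have hr₁ : r₁.natDegree ≤ n := hrd _ (degree_modByMonic_lt A hm)
    have hr₂ : r₂.natDegree ≤ n := hrd _ (degree_modByMonic_lt B hm)
    have hr₃ : r₃.natDegree ≤ n := hrd _ (degree_modByMonic_lt D hm)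
    by_cases hr0 : r₁ = 0 ∧ r₂ = 0 ∧ r₃ = 0
    · refine ⟨W₁, W₂, W₃, ?_⟩
      rw [hA, hB, hD, hr0.1, hr0.2.1, hr0.2.2] at heq
      have hcan : d'^2 * (C c₁ * W₁^2 + C c₂ * W₂^2 + C c₃ * W₃^2) = d'^2 * p := by
        linear_combination heq
      exact mul_left_cancel₀ (pow_ne_zero 2 hd') hcan
    · have hqr : C c₁ * r₁^2 + C c₂ * r₂^2 + C c₃ * r₃^2 ≠ 0 := fun hc =>
        hr0 (aniso_poly h _ _ _ hc)
      have hrA : r₁ = A - d' * W₁ := by linear_combination -hA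
      have hrB : r₂ = B - d' * W₂ := by linear_combination -hB
      have hrD : r₃ = D - d' * W₃ := by linear_combination -hD
      have hde : C c₁ * r₁^2 + C c₂ * r₂^2 + C c₃ * r₃^2
          = d' * (p*d' - 2*(C c₁*A*W₁ + C c₂*B*W₂ + C c₃*D*W₃)
              + d'*(C c₁*W₁^2 + C c₂*W₂^2 + C c₃*W₃^2)) := by
        rw [hrA, hrB, hrD]
        linear_combination heq
      set e := p*d' - 2*(C c₁*A*W₁ + C c₂*B*W₂ + C c₃*D*W₃)
          + d'*(C c₁*W₁^2 + C c₂*W₂^2 + C c₃*W₃^2) with he_def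
      have he0 : e ≠ 0 := by
        intro hc
        rw [hc, mul_zero] at hde
        exact hqr hde
      have hqrdeg : (C c₁ * r₁^2 + C c₂ * r₂^2 + C c₃ * r₃^2).natDegree ≤ 2*n := by
        have b1 : (C c₁ * r₁^2).natDegree ≤ 2*n := by
          refine (natDegree_mul_le).trans ?_
          have := natDegree_pow_le (p := r₁) (n := 2)
          simp only [natDegree_C]
          omega
        have b2 : (C c₂ * r₂^2).natDegree ≤ 2*n := by
          refine (natDegree_mul_le).trans ?_
          have := natDegree_pow_le (p := r₂) (n := 2)
          simp only [natDegree_C]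
          omega
        have b3 : (C c₃ * r₃^2).natDegree ≤ 2*n := by
          refine (natDegree_mul_le).trans ?_
          have := natDegree_pow_le (p := r₃) (n := 2)
          simp only [natDegree_C]
          omega
        refine (natDegree_add_le _ _).trans ?_
        have := (natDegree_add_le (C c₁ * r₁^2) (C c₂ * r₂^2))
        omega
      have hedeg : e.natDegree ≤ n := by
        have := natDegree_mul hd' he0
        rw [← hde, hnd'] at this
        omega
      refine ih e ((C c₁*W₁^2 + C c₂*W₂^2 + C c₃*W₃^2 - p)*A
          + 2*(p*d' - (C c₁*A*W₁ + C c₂*B*W₂ + C c₃*D*W₃))*W₁)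
        ((C c₁*W₁^2 + C c₂*W₂^2 + C c₃*W₃^2 - p)*B
          + 2*(p*d' - (C c₁*A*W₁ + C c₂*B*W₂ + C c₃*D*W₃))*W₂)
        ((C c₁*W₁^2 + C c₂*W₂^2 + C c₃*W₃^2 - p)*D
          + 2*(p*d' - (C c₁*A*W₁ + C c₂*B*W₂ + C c₃*D*W₃))*W₃) he0 hedeg ?_
      rw [he_def]
      linear_combination (C c₁*W₁^2 + C c₂*W₂^2 + C c₃*W₃^2 - p)^2 * heq

private lemma quad_coeffs {k : Type*} [Field k] (p2 p1 p0 q2 q1 q0 : k)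
    (h : C p2*X^2 + C p1*X + C p0 = C q2*X^2 + C q1*X + C q0) :
    p2 = q2 ∧ p1 = q1 ∧ p0 = q0 := by
  refine ⟨?_, ?_, ?_⟩
  · have h2 := congrArg (fun f => Polynomial.coeff f 2) h
    simpa using h2
  · have h1 := congrArg (fun f => Polynomial.coeff f 1) h
    simpa using h1
  · have h0 := congrArg (fun f => Polynomial.coeff f 0) h
    simpa using h0

private lemma extract_coeffs {k : Type*} [Field k] (hchar : (2:k) ≠ 0) {c₁ c₂ c₃ a b : k}
    (h : ∀ x y z : k, c₁*x^2 + c₂*y^2 + c₃*z^2 = 0 → x = 0 ∧ y = 0 ∧ z = 0)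
    (α β γ : Polynomial k)
    (hsol : C c₁*α^2 + C c₂*β^2 + C c₃*γ^2 = C a * X^2 + C b) :
    ∃ x1 y1 z1 x0 y0 z0 : k,
      c₁*x1^2 + c₂*y1^2 + c₃*z1^2 = a ∧
      c₁*x1*x0 + c₂*y1*y0 + c₃*z1*z0 = 0 ∧
      c₁*x0^2 + c₂*y0^2 + c₃*z0^2 = b := by
  set m := max (max α.natDegree β.natDegree) γ.natDegree with hm
  have hm1 : m ≤ 1 := by
    by_contra hm2
    push_neg at hm2
    have hco := congrArg (fun q => Polynomial.coeff q (2*m)) hsol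
    simp only [coeff_add, coeff_C_mul, coeff_sq_two_mul (show α.natDegree ≤ m by omega),
      coeff_sq_two_mul (show β.natDegree ≤ m by omega),
      coeff_sq_two_mul (show γ.natDegree ≤ m by omega)] at hco
    rw [coeff_X_pow, if_neg (by omega), coeff_C, if_neg (by omega)] at hco
    simp only [mul_zero, add_zero] at hco
    obtain ⟨h1, h2, h3⟩ := h _ _ _ hco
    have := max3_eq_zero hm h1 h2 h3
    omega
  rw [eq_X_add_C_of_natDegree_le_one (p := α) (by omega),
    eq_X_add_C_of_natDegree_le_one (p := β) (by omega),
    eq_X_add_C_of_natDegree_le_one (p := γ) (by omega)] at hsol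
  refine ⟨α.coeff 1, β.coeff 1, γ.coeff 1, α.coeff 0, β.coeff 0, γ.coeff 0, ?_⟩
  have key : C c₁ * (C (α.coeff 1) * X + C (α.coeff 0))^2
      + C c₂ * (C (β.coeff 1) * X + C (β.coeff 0))^2
      + C c₃ * (C (γ.coeff 1) * X + C (γ.coeff 0))^2
      = C (c₁*(α.coeff 1)^2 + c₂*(β.coeff 1)^2 + c₃*(γ.coeff 1)^2) * X^2
        + C (2*(c₁*(α.coeff 1)*(α.coeff 0) + c₂*(β.coeff 1)*(β.coeff 0)
            + c₃*(γ.coeff 1)*(γ.coeff 0))) * X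
        + C (c₁*(α.coeff 0)^2 + c₂*(β.coeff 0)^2 + c₃*(γ.coeff 0)^2) := by
    simp only [map_add, map_mul, map_pow, map_ofNat]
    ring
  rw [key] at hsol
  have key2 : (C a * X^2 + C b : Polynomial k) = C a * X^2 + C 0 * X + C b := by
    simp
  rw [key2] at hsol
  obtain ⟨e2, e1, e0⟩ := quad_coeffs _ _ _ _ _ _ hsol
  refine ⟨e2, ?_, e0⟩
  rcases mul_eq_zero.mp e1 with hc | hc
  · exact absurd hc hchar
  · exact hc

private lemma aniso_pure {k : Type*} [Field k] {a' b' : k} (ha' : a' ≠ 0)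
    (h : ∀ x y z : k, x^2 - a'*y^2 - b'*z^2 = 0 → x = 0 ∧ y = 0 ∧ z = 0) :
    ∀ x y z : k, a'*x^2 + b'*y^2 + (-(a'*b'))*z^2 = 0 → x = 0 ∧ y = 0 ∧ z = 0 := by
  intro α β γ heq
  obtain ⟨k1, k2, k3⟩ := h (a'*α*γ) (α*β) (β^2 - a'*γ^2)
    (by linear_combination (-(β^2 - a'*γ^2)) * heq)
  obtain ⟨hβ, hγ, -⟩ := h β γ 0 (by linear_combination k3)
  refine ⟨?_, hβ, hγ⟩
  have hα : a' * α^2 = 0 := by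
    linear_combination heq + (-(b'*β))*hβ + (a'*b'*γ)*hγ
  have := (mul_eq_zero.mp hα).resolve_left ha'
  exact pow_eq_zero_iff (by norm_num) |>.mp this

private lemma quat_iso {k : Type*} [Field k] (hchar : (2:k) ≠ 0)
    {a b a' b' : k} (ha : a ≠ 0) (hb : b ≠ 0)
    (x1 y1 z1 x0 y0 z0 : k)
    (h2 : a'*x1^2 + b'*y1^2 - a'*b'*z1^2 = a)
    (h1 : a'*x1*x0 + b'*y1*y0 - a'*b'*z1*z0 = 0)
    (h0 : a'*x0^2 + b'*y0^2 - a'*b'*z0^2 = b) :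
    Nonempty (ℍ[k, a, b] ≃ₐ[k] ℍ[k, a', b']) := by
  set p : ℍ[k,a',b'] := ⟨0, x1, y1, z1⟩ with hp_def
  set q : ℍ[k,a',b'] := ⟨0, x0, y0, z0⟩ with hq_def
  have hsmul : ∀ c : k, c • (1 : ℍ[k,a',b']) = ⟨c, 0, 0, 0⟩ := by
    intro c
    ext <;> simp
  have hp2 : p * p = a • (1 : ℍ[k,a',b']) := by
    rw [hsmul]
    ext <;> simp [hp_def] <;> ring_nf
    · linear_combination h2
  have hq2 : q * q = b • (1 : ℍ[k,a',b']) := by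
    rw [hsmul]
    ext <;> simp [hq_def] <;> ring_nf
    · linear_combination h0
  have hanti : q * p = -(p * q) := by
    ext <;> simp [hp_def, hq_def] <;> ring_nf
    · linear_combination (2 : k) * h1
  have hppq : p * (p * q) = a • q := by
    rw [← mul_assoc, hp2, smul_mul_assoc, one_mul]
  have hpqp : (p * q) * p = -(a • q) := by
    rw [mul_assoc, hanti, mul_neg, hppq]
  have hqpq : q * (p * q) = -(b • p) := by
    rw [← mul_assoc, hanti, neg_mul, mul_assoc, hq2, mul_smul_comm, mul_one]
  have hpqq : (p * q) * q = b • p := by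
    rw [mul_assoc, hq2, mul_smul_comm, mul_one]
  have hss : (p * q) * (p * q) = -((a * b) • (1 : ℍ[k,a',b'])) := by
    rw [← mul_assoc, hpqp, neg_mul, smul_mul_assoc, hq2, smul_smul]
  let Bas : QuaternionAlgebra.Basis ℍ[k,a',b'] a 0 b :=
    { i := p, j := q, k := p * q,
      i_mul_i := by rw [hp2, zero_smul, add_zero], j_mul_j := hq2, i_mul_j := rfl,
      j_mul_i := by rw [hanti, zero_smul, zero_sub] }
  let Φ : ℍ[k,a,b] →ₐ[k] ℍ[k,a',b'] := Bas.liftHom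
  have hΦ : ∀ x : ℍ[k,a,b],
      Φ x = x.re • (1 : ℍ[k,a',b']) + x.imI • p + x.imJ • q + x.imK • (p*q) := by
    intro x
    show QuaternionAlgebra.Basis.lift Bas x = _
    rw [QuaternionAlgebra.Basis.lift, Algebra.algebraMap_eq_smul_one]
  have hpq_re : (p*q).re = 0 := by
    show 0 * 0 + a' * x1 * x0 + b' * y1 * y0 + 0 * b' * y1 * z0 - a' * b' * z1 * z0 = 0
    linear_combination h1
  have hinj : Function.Injective Φ := by
    rw [injective_iff_map_eq_zero]
    intro x hx
    rw [hΦ] at hx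
    have hre : x.re = 0 := by
      have hc := congrArg QuaternionAlgebra.re hx
      simp only [QuaternionAlgebra.re_add, QuaternionAlgebra.re_smul, hpq_re,
        QuaternionAlgebra.re_one, QuaternionAlgebra.re_zero, smul_eq_mul,
        mul_one, mul_zero, add_zero] at hc
      simpa [hp_def, hq_def] using hc
    rw [hre, zero_smul, zero_add] at hx
    have h_i : p * (x.imI • p + x.imJ • q + x.imK • (p*q))
        + (x.imI • p + x.imJ • q + x.imK • (p*q)) * p = (2*(a*x.imI)) • 1 := by
      simp only [mul_add, add_mul, mul_smul_comm, smul_mul_assoc, hp2, hanti, hppq, hpqp]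
      module
    have h_j : q * (x.imI • p + x.imJ • q + x.imK • (p*q))
        + (x.imI • p + x.imJ • q + x.imK • (p*q)) * q = (2*(b*x.imJ)) • 1 := by
      simp only [mul_add, add_mul, mul_smul_comm, smul_mul_assoc, hq2, hanti, hqpq, hpqq]
      module
    have h_k : (p*q) * (x.imI • p + x.imJ • q + x.imK • (p*q))
        + (x.imI • p + x.imJ • q + x.imK • (p*q)) * (p*q)
        = (-(2*((a*b)*x.imK))) • 1 := by
      simp only [mul_add, add_mul, mul_smul_comm, smul_mul_assoc, hppq, hpqp, hqpq, hpqq, hss]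
      module
    rw [hx, mul_zero, zero_mul, add_zero] at h_i h_j h_k
    have hI : x.imI = 0 := by
      have hc := congrArg QuaternionAlgebra.re h_i
      simp only [QuaternionAlgebra.re_zero, QuaternionAlgebra.re_smul,
        QuaternionAlgebra.re_one, smul_eq_mul, mul_one] at hc
      rcases mul_eq_zero.mp hc.symm with h | h
      · exact absurd h hchar
      · rcases mul_eq_zero.mp h with h' | h'
        · exact absurd h' ha
        · exact h'
    have hJ : x.imJ = 0 := by
      have hc := congrArg QuaternionAlgebra.re h_j
      simp only [QuaternionAlgebra.re_zero, QuaternionAlgebra.re_smul,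
        QuaternionAlgebra.re_one, smul_eq_mul, mul_one] at hc
      rcases mul_eq_zero.mp hc.symm with h | h
      · exact absurd h hchar
      · rcases mul_eq_zero.mp h with h' | h'
        · exact absurd h' hb
        · exact h'
    have hK : x.imK = 0 := by
      have hc := congrArg QuaternionAlgebra.re h_k
      simp only [QuaternionAlgebra.re_zero, QuaternionAlgebra.re_smul,
        QuaternionAlgebra.re_one, smul_eq_mul, mul_one] at hc
      have hc' : 2*((a*b)*x.imK) = 0 := by linear_combination hc
      rcases mul_eq_zero.mp hc' with h | h
      · exact absurd h hchar
      · rcases mul_eq_zero.mp h with h' | h'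
        · exact absurd h' (mul_ne_zero ha hb)
        · exact h'
    exact QuaternionAlgebra.ext (by simpa using hre) (by simpa using hI)
      (by simpa using hJ) (by simpa using hK)
  have hfr : Module.finrank k ℍ[k,a,b] = Module.finrank k ℍ[k,a',b'] := by
    rw [QuaternionAlgebra.finrank_eq_four, QuaternionAlgebra.finrank_eq_four]
  have hsurj : Function.Surjective Φ :=
    (LinearMap.injective_iff_surjective_of_finrank_eq_finrank (f := Φ.toLinearMap) hfr).mp hinj
  exact ⟨AlgEquiv.ofBijective Φ ⟨hinj, hsurj⟩⟩

private lemma clear_denoms {R : Type*} [CommRing R] [IsDomain R] (A' B' : R)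
    (x y z : FractionRing R) (hne : (x, y, z) ≠ (0, 0, 0))
    (heq : x^2 - algebraMap R (FractionRing R) A' * y^2
      - algebraMap R (FractionRing R) B' * z^2 = 0) :
    ∃ X Y Z : R, (X ≠ 0 ∨ Y ≠ 0 ∨ Z ≠ 0) ∧ X^2 - A'*Y^2 - B'*Z^2 = 0 := by
  obtain ⟨r₁, s₁, hs₁, hx⟩ := IsFractionRing.div_surjective (A := R) x
  obtain ⟨r₂, s₂, hs₂, hy⟩ := IsFractionRing.div_surjective (A := R) y
  obtain ⟨r₃, s₃, hs₃, hz⟩ := IsFractionRing.div_surjective (A := R) z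
  have hs₁0 : algebraMap R (FractionRing R) s₁ ≠ 0 :=
    IsFractionRing.to_map_ne_zero_of_mem_nonZeroDivisors hs₁
  have hs₂0 : algebraMap R (FractionRing R) s₂ ≠ 0 :=
    IsFractionRing.to_map_ne_zero_of_mem_nonZeroDivisors hs₂
  have hs₃0 : algebraMap R (FractionRing R) s₃ ≠ 0 :=
    IsFractionRing.to_map_ne_zero_of_mem_nonZeroDivisors hs₃
  have hxu : algebraMap R (FractionRing R) (r₁*s₂*s₃)
      = x * algebraMap R (FractionRing R) (s₁*s₂*s₃) := by
    rw [← hx, map_mul, map_mul, map_mul, map_mul]; field_simp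
  have hyu : algebraMap R (FractionRing R) (s₁*r₂*s₃)
      = y * algebraMap R (FractionRing R) (s₁*s₂*s₃) := by
    rw [← hy, map_mul, map_mul, map_mul, map_mul]; field_simp
  have hzu : algebraMap R (FractionRing R) (s₁*s₂*r₃)
      = z * algebraMap R (FractionRing R) (s₁*s₂*s₃) := by
    rw [← hz, map_mul, map_mul, map_mul, map_mul]; field_simp
  have hu0 : algebraMap R (FractionRing R) (s₁*s₂*s₃) ≠ 0 := by
    rw [map_mul, map_mul]
    exact mul_ne_zero (mul_ne_zero hs₁0 hs₂0) hs₃0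
  refine ⟨r₁*s₂*s₃, s₁*r₂*s₃, s₁*s₂*r₃, ?_, ?_⟩
  · have : x ≠ 0 ∨ y ≠ 0 ∨ z ≠ 0 := by
      by_contra hc
      push_neg at hc
      exact hne (by simp [hc.1, hc.2.1, hc.2.2])
    rcases this with h' | h' | h'
    · left; intro hc; rw [hc, map_zero] at hxu
      exact h' ((mul_eq_zero.mp hxu.symm).resolve_right hu0)
    · right; left; intro hc; rw [hc, map_zero] at hyu
      exact h' ((mul_eq_zero.mp hyu.symm).resolve_right hu0)
    · right; right; intro hc; rw [hc, map_zero] at hzu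
      exact h' ((mul_eq_zero.mp hzu.symm).resolve_right hu0)
  · apply IsFractionRing.injective R (FractionRing R)
    have hX2 : (algebraMap R (FractionRing R) (r₁*s₂*s₃))^2
        = x^2 * (algebraMap R (FractionRing R) (s₁*s₂*s₃))^2 := by rw [hxu]; ring
    have hY2 : (algebraMap R (FractionRing R) (s₁*r₂*s₃))^2
        = y^2 * (algebraMap R (FractionRing R) (s₁*s₂*s₃))^2 := by rw [hyu]; ring
    have hZ2 : (algebraMap R (FractionRing R) (s₁*s₂*r₃))^2
        = z^2 * (algebraMap R (FractionRing R) (s₁*s₂*s₃))^2 := by rw [hzu]; ring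
    simp only [map_sub, map_pow, map_mul, map_zero] at hX2 hY2 hZ2 ⊢
    linear_combination hX2 + (algebraMap R (FractionRing R) s₁ * algebraMap R (FractionRing R) s₂
        * algebraMap R (FractionRing R) s₃)^2 * heq
      - algebraMap R (FractionRing R) A' * hY2 - algebraMap R (FractionRing R) B' * hZ2

private lemma quot_to_dvd {A : Type*} [CommRing A] (g a' b' : A)
    (XX YY ZZ : A ⧸ Ideal.span {g})
    (hne : XX ≠ 0 ∨ YY ≠ 0 ∨ ZZ ≠ 0)
    (heq : XX^2 - (Ideal.Quotient.mk (Ideal.span {g}) a')*YY^2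
      - (Ideal.Quotient.mk (Ideal.span {g}) b')*ZZ^2 = 0) :
    ∃ P Q T : A, (¬ g ∣ P ∨ ¬ g ∣ Q ∨ ¬ g ∣ T) ∧
      g ∣ (P^2 - a' * Q^2 - b' * T^2) := by
  obtain ⟨P, hP⟩ := Ideal.Quotient.mk_surjective XX
  obtain ⟨Q, hQ⟩ := Ideal.Quotient.mk_surjective YY
  obtain ⟨T, hT⟩ := Ideal.Quotient.mk_surjective ZZ
  have hmem : ∀ W : A, g ∣ W → Ideal.Quotient.mk (Ideal.span {g}) W = 0 := by
    intro W hW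
    rw [Ideal.Quotient.eq_zero_iff_mem]
    exact Ideal.mem_span_singleton.mpr hW
  refine ⟨P, Q, T, ?_, ?_⟩
  · rcases hne with h' | h' | h'
    · exact Or.inl (fun hc => h' (by rw [← hP]; exact hmem P hc))
    · exact Or.inr (Or.inl (fun hc => h' (by rw [← hQ]; exact hmem Q hc)))
    · exact Or.inr (Or.inr (fun hc => h' (by rw [← hT]; exact hmem T hc)))
  · rw [← Ideal.mem_span_singleton, ← Ideal.Quotient.eq_zero_iff_mem]
    rw [map_sub, map_sub, map_mul, map_mul, map_pow, map_pow, map_pow, hP, hQ, hT]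
    exact heq

private noncomputable def EE (k : Type*) [Field k] :
    MvPolynomial (Fin 2) k ≃ₐ[k] Polynomial (Polynomial k) :=
  (MvPolynomial.finSuccEquiv k 1).trans <| Polynomial.mapAlgEquiv <|
    (MvPolynomial.finSuccEquiv k 0).trans <| Polynomial.mapAlgEquiv <|
      MvPolynomial.isEmptyAlgEquiv k (Fin 0)

private lemma EE_X0 {k : Type*} [Field k] : EE k (MvPolynomial.X 0) = Polynomial.X := by
  simp [EE, MvPolynomial.finSuccEquiv_X_zero, Polynomial.map_X]

private lemma EE_X1 {k : Type*} [Field k] : EE k (MvPolynomial.X 1) = Polynomial.C Polynomial.X := by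
  have h1 : (1 : Fin 2) = Fin.succ 0 := rfl
  rw [EE, AlgEquiv.trans_apply, h1, MvPolynomial.finSuccEquiv_X_succ]
  simp [MvPolynomial.finSuccEquiv_X_zero]

private lemma EE_C {k : Type*} [Field k] (c : k) :
    EE k (MvPolynomial.C c) = Polynomial.C (Polynomial.C c) := by
  simp [EE, MvPolynomial.finSuccEquiv_apply, MvPolynomial.eval₂Hom_C]
  exact MvPolynomial.coeff_zero_C c

private lemma poly_decompose {k : Type*} [Field k] (a b a' b' : k)
    (P Q T : MvPolynomial (Fin 2) k)
    (hne : ¬ ((MvPolynomial.X 0) ^ 2 - MvPolynomial.C a * (MvPolynomial.X 1) ^ 2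
          - MvPolynomial.C b) ∣ P
        ∨ ¬ ((MvPolynomial.X 0) ^ 2 - MvPolynomial.C a * (MvPolynomial.X 1) ^ 2
          - MvPolynomial.C b) ∣ Q
        ∨ ¬ ((MvPolynomial.X 0) ^ 2 - MvPolynomial.C a * (MvPolynomial.X 1) ^ 2
          - MvPolynomial.C b) ∣ T)
    (hdvd : ((MvPolynomial.X 0) ^ 2 - MvPolynomial.C a * (MvPolynomial.X 1) ^ 2
          - MvPolynomial.C b) ∣
        (P^2 - MvPolynomial.C a' * Q^2 - MvPolynomial.C b' * T^2)) :
    ∃ x₁ x₀ y₁ y₀ z₁ z₀ : Polynomial k,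
      (¬(x₁ = 0 ∧ x₀ = 0) ∨ ¬(y₁ = 0 ∧ y₀ = 0) ∨ ¬(z₁ = 0 ∧ z₀ = 0)) ∧
      2*(x₁*x₀ - C a'*y₁*y₀ - C b'*z₁*z₀) = 0 ∧
      (x₀^2 - C a'*y₀^2 - C b'*z₀^2)
        + (C a * X^2 + C b)*(x₁^2 - C a'*y₁^2 - C b'*z₁^2) = 0 := by
  set f : Polynomial k := C a * X^2 + C b with hf
  set m : Polynomial (Polynomial k) := X^2 - C f with hm_def
  have hmmonic : Monic m := monic_X_pow_sub (by
    refine (degree_C_le).trans_lt ?_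
    norm_num)
  have hmdeg : m.degree = 2 := by
    rw [hm_def]
    exact degree_X_pow_sub_C (by norm_num) f
  have hmnatdeg : m.natDegree = 2 := natDegree_eq_of_degree_eq_some hmdeg
  -- E g = m
  have hEg : EE k ((MvPolynomial.X 0) ^ 2 - MvPolynomial.C a * (MvPolynomial.X 1) ^ 2
      - MvPolynomial.C b) = m := by
    rw [map_sub, map_sub, map_mul, map_pow, map_pow, EE_X0, EE_X1, EE_C, EE_C, hm_def, hf]
    simp only [map_add, map_mul, map_pow]
    ring
  -- transfer divisibility
  have hdvdE : m ∣ ((EE k P)^2 - C (C a') * (EE k Q)^2 - C (C b') * (EE k T)^2) := by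
    rw [← hEg, ← EE_C a', ← EE_C b']
    obtain ⟨c, hc⟩ := hdvd
    exact ⟨EE k c, by rw [← map_mul, ← hc, map_sub, map_sub, map_mul, map_mul,
      map_pow, map_pow, map_pow]⟩
  have hneE : ¬ m ∣ EE k P ∨ ¬ m ∣ EE k Q ∨ ¬ m ∣ EE k T := by
    have key : ∀ W : MvPolynomial (Fin 2) k, m ∣ EE k W →
        ((MvPolynomial.X 0) ^ 2 - MvPolynomial.C a * (MvPolynomial.X 1) ^ 2
          - MvPolynomial.C b) ∣ W := by
      intro W hW
      rw [← hEg] at hW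
      obtain ⟨c, hc⟩ := hW
      exact ⟨(EE k).symm c, by
        apply (EE k).injective
        rw [map_mul, hc, AlgEquiv.apply_symm_apply]⟩
    rcases hne with h' | h' | h'
    · exact Or.inl (fun hc => h' (key P hc))
    · exact Or.inr (Or.inl (fun hc => h' (key Q hc)))
    · exact Or.inr (Or.inr (fun hc => h' (key T hc)))
  -- decompose remainders
  have hd2 : ∀ W : Polynomial (Polynomial k), (W %ₘ m).natDegree ≤ 1 := by
    intro W
    have hlt := degree_modByMonic_lt W hmmonic
    rcases eq_or_ne (W %ₘ m) 0 with h0 | h0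
    · rw [h0]; simp
    · have := Polynomial.natDegree_lt_natDegree h0 hlt
      omega
  have hmodne : ∀ W : Polynomial (Polynomial k), ¬ m ∣ W → W %ₘ m ≠ 0 := by
    intro W hW hc
    exact hW ((modByMonic_eq_zero_iff_dvd hmmonic).mp hc)
  -- names for the remainder coefficients
  refine ⟨((EE k P) %ₘ m).coeff 1, ((EE k P) %ₘ m).coeff 0,
    ((EE k Q) %ₘ m).coeff 1, ((EE k Q) %ₘ m).coeff 0,
    ((EE k T) %ₘ m).coeff 1, ((EE k T) %ₘ m).coeff 0, ?_, ?_⟩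
  · have key : ∀ W : Polynomial (Polynomial k), ¬ m ∣ W →
        ¬((W %ₘ m).coeff 1 = 0 ∧ (W %ₘ m).coeff 0 = 0) := by
      intro W hW hc
      apply hmodne W hW
      rw [eq_X_add_C_of_natDegree_le_one (hd2 W), hc.1, hc.2]
      simp
    rcases hneE with h' | h' | h'
    · exact Or.inl (key _ h')
    · exact Or.inr (Or.inl (key _ h'))
    · exact Or.inr (Or.inr (key _ h'))
  constructor
  all_goals {
    have hρP : (EE k P) %ₘ m + m * ((EE k P) /ₘ m) = EE k P := modByMonic_add_div _ m
    have hρQ : (EE k Q) %ₘ m + m * ((EE k Q) /ₘ m) = EE k Q := modByMonic_add_div _ m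
    have hρT : (EE k T) %ₘ m + m * ((EE k T) /ₘ m) = EE k T := modByMonic_add_div _ m
    have hWd : m ∣ (((EE k P) %ₘ m)^2 - C (C a') * ((EE k Q) %ₘ m)^2
        - C (C b') * ((EE k T) %ₘ m)^2) := by
      obtain ⟨c, hc⟩ := hdvdE
      refine ⟨c - (2*(EE k P)*((EE k P) /ₘ m) - m*((EE k P) /ₘ m)^2
        - C (C a')*(2*(EE k Q)*((EE k Q) /ₘ m) - m*((EE k Q) /ₘ m)^2)
        - C (C b')*(2*(EE k T)*((EE k T) /ₘ m) - m*((EE k T) /ₘ m)^2)), ?_⟩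
      have e1 : (EE k P) %ₘ m = EE k P - m * ((EE k P) /ₘ m) := by linear_combination hρP
      have e2 : (EE k Q) %ₘ m = EE k Q - m * ((EE k Q) /ₘ m) := by linear_combination hρQ
      have e3 : (EE k T) %ₘ m = EE k T - m * ((EE k T) /ₘ m) := by linear_combination hρT
      rw [e1, e2, e3]
      linear_combination hc
    have hρPC : (EE k P) %ₘ m = C (((EE k P) %ₘ m).coeff 1) * X + C (((EE k P) %ₘ m).coeff 0) :=
      eq_X_add_C_of_natDegree_le_one (hd2 _)
    have hρQC : (EE k Q) %ₘ m = C (((EE k Q) %ₘ m).coeff 1) * X + C (((EE k Q) %ₘ m).coeff 0) :=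
      eq_X_add_C_of_natDegree_le_one (hd2 _)
    have hρTC : (EE k T) %ₘ m = C (((EE k T) %ₘ m).coeff 1) * X + C (((EE k T) %ₘ m).coeff 0) :=
      eq_X_add_C_of_natDegree_le_one (hd2 _)
    set x₁ := ((EE k P) %ₘ m).coeff 1; set x₀ := ((EE k P) %ₘ m).coeff 0
    set y₁ := ((EE k Q) %ₘ m).coeff 1; set y₀ := ((EE k Q) %ₘ m).coeff 0
    set z₁ := ((EE k T) %ₘ m).coeff 1; set z₀ := ((EE k T) %ₘ m).coeff 0
    have hlin : C (2*(x₁*x₀ - C a'*y₁*y₀ - C b'*z₁*z₀)) * X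
        + C ((x₀^2 - C a'*y₀^2 - C b'*z₀^2) + f*(x₁^2 - C a'*y₁^2 - C b'*z₁^2))
        = (((EE k P) %ₘ m)^2 - C (C a') * ((EE k Q) %ₘ m)^2 - C (C b') * ((EE k T) %ₘ m)^2)
          - m * C (x₁^2 - C a'*y₁^2 - C b'*z₁^2) := by
      rw [hρPC, hρQC, hρTC, hm_def]
      simp only [map_add, map_mul, map_sub, map_pow, map_ofNat]
      ring
    have hdvd3 : m ∣ (C (2*(x₁*x₀ - C a'*y₁*y₀ - C b'*z₁*z₀)) * X
        + C ((x₀^2 - C a'*y₀^2 - C b'*z₀^2) + f*(x₁^2 - C a'*y₁^2 - C b'*z₁^2))) := by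
      rw [hlin]
      exact dvd_sub hWd (Dvd.intro _ rfl)
    have hzero := Polynomial.eq_zero_of_dvd_of_degree_lt hdvd3 (by
      refine (degree_linear_le).trans_lt ?_
      rw [hmdeg]
      decide)
    have hco1 := congrArg (fun q => Polynomial.coeff q 1) hzero
    have hco0 := congrArg (fun q => Polynomial.coeff q 0) hzero
    norm_num [coeff_add, coeff_C_mul, coeff_X_one, coeff_X_zero, ← map_pow, coeff_C, coeff_zero] at hco1 hco0
    first
      | (rcases hco1 with h2 | h2
         · rw [h2, zero_mul]
         · rw [h2, mul_zero])
      | linear_combination hco0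
  }

/-- Amitsur's lemma for conics: if the conic `x² − a'y² − b'z² = 0` has a
nontrivial point over the function field `K = Frac(k[X, Y]/(X² − aY² − b))` of
the conic `x² − ay² − bz² = 0`, then either it already has a nontrivial
`k`-point, or the two quaternion algebras `ℍ[k, a, b]` and `ℍ[k, a', b']` are
isomorphic (i.e. the two conics are `k`-isomorphic). -/
theorem amitsur_lemma_conics
    (k : Type*) [Field k] (hchar : (2 : k) ≠ 0)
    (a b a' b' : k) (ha : a ≠ 0) (hb : b ≠ 0) (ha' : a' ≠ 0) (hb' : b' ≠ 0)
    [IsDomain (ConicCoordRing k a b)]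
    (h : ∃ x y z : FractionRing (ConicCoordRing k a b), (x, y, z) ≠ (0, 0, 0) ∧
      x ^ 2
        - algebraMap (ConicCoordRing k a b) _ (algebraMap k _ a') * y ^ 2
        - algebraMap (ConicCoordRing k a b) _ (algebraMap k _ b') * z ^ 2 = 0) :
    (∃ x y z : k, (x, y, z) ≠ (0, 0, 0) ∧ x ^ 2 - a' * y ^ 2 - b' * z ^ 2 = 0) ∨
      Nonempty (ℍ[k, a, b] ≃ₐ[k] ℍ[k, a', b']) := by
  classical
  by_cases hk : ∃ x y z : k, (x, y, z) ≠ (0, 0, 0) ∧ x ^ 2 - a' * y ^ 2 - b' * z ^ 2 = 0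
  · exact Or.inl hk
  right
  push_neg at hk
  have haniso : ∀ x y z : k, x^2 - a'*y^2 - b'*z^2 = 0 → x = 0 ∧ y = 0 ∧ z = 0 := by
    intro x y z hxyz
    by_contra hc
    refine hk x y z ?_ hxyz
    intro hp
    apply hc
    rw [Prod.mk.injEq, Prod.mk.injEq] at hp
    exact ⟨hp.1, hp.2.1, hp.2.2⟩
  obtain ⟨x, y, z, hne, heqK⟩ := h
  obtain ⟨XX, YY, ZZ, hne3, heqR⟩ := clear_denoms
    (algebraMap k (ConicCoordRing k a b) a') (algebraMap k (ConicCoordRing k a b) b')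
    x y z hne heqK
  obtain ⟨P, Q, T, hneP, hdvd⟩ := quot_to_dvd
    ((MvPolynomial.X 0) ^ 2 - MvPolynomial.C a * (MvPolynomial.X 1) ^ 2 - MvPolynomial.C b)
    (MvPolynomial.C a') (MvPolynomial.C b') XX YY ZZ hne3 heqR
  obtain ⟨x₁, x₀, y₁, y₀, z₁, z₀, hne6, hmid, hsum⟩ :=
    poly_decompose a b a' b' P Q T hneP hdvd
  -- scalar anisotropy in the two needed diagonal forms
  have hphi : ∀ x y z : k, (1:k)*x^2 + (-a')*y^2 + (-b')*z^2 = 0 → x = 0 ∧ y = 0 ∧ z = 0 :=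
    fun x y z hxyz => haniso x y z (by linear_combination hxyz)
  have hqq := aniso_pure ha' haniso
  -- the middle coefficient, divided by 2
  have h2poly : (2 : Polynomial k) ≠ 0 := by
    intro hc
    apply hchar
    have := congrArg (fun p => Polynomial.coeff p 0) hc
    simpa using this
  have hmid' : x₁*x₀ - C a'*y₁*y₀ - C b'*z₁*z₀ = 0 :=
    (mul_eq_zero.mp hmid).resolve_left h2poly
  -- the leading form is nonzero
  have hA₂ : x₁^2 - C a'*y₁^2 - C b'*z₁^2 ≠ 0 := by
    intro hc
    obtain ⟨e1, e2, e3⟩ := aniso_poly hphi x₁ y₁ z₁ (by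
      rw [map_one, map_neg, map_neg]; linear_combination hc)
    obtain ⟨f1, f2, f3⟩ := aniso_poly hphi x₀ y₀ z₀ (by
      rw [map_one, map_neg, map_neg]
      linear_combination hsum - (C a * X^2 + C b) * hc)
    rcases hne6 with h6 | h6 | h6
    · exact h6 ⟨e1, f1⟩
    · exact h6 ⟨e2, f2⟩
    · exact h6 ⟨e3, f3⟩
  -- the Cassels–Pfister input: the pure form represents f times a square
  have hrep : C a' * (x₁*y₀ - x₀*y₁)^2 + C b' * (x₁*z₀ - x₀*z₁)^2
      + C (-(a'*b')) * (y₁*z₀ - y₀*z₁)^2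
      = (C a * X^2 + C b) * (x₁^2 - C a'*y₁^2 - C b'*z₁^2)^2 := by
    rw [map_neg, map_mul]
    linear_combination (x₁*x₀ - C a'*y₁*y₀ - C b'*z₁*z₀) * hmid'
      - (x₁^2 - C a'*y₁^2 - C b'*z₁^2) * hsum
  -- anisotropy of the pure form over the polynomial ring lets us descend
  obtain ⟨α, β, γ, hsol⟩ := descent_aux hqq (C a * X^2 + C b)
    (x₁^2 - C a'*y₁^2 - C b'*z₁^2).natDegree
    (x₁^2 - C a'*y₁^2 - C b'*z₁^2) _ _ _ hA₂ le_rfl hrep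
  obtain ⟨u1, v1, w1, u0, v0, w0, e2, e1, e0⟩ := extract_coeffs hchar hqq α β γ hsol
  exact quat_iso hchar ha hb u1 v1 w1 u0 v0 w0
    (by linear_combination e2) (by linear_combination e1) (by linear_combination e0)
end
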